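/- Let T1, T2, T3 be regular n-tournaments with adjacency matrices A, B, C, and let M be the 3n×3n block matrix with diagonal blocks A, B, C, with the (1,2) and (2,3) and (3,1) blocks equal to the all-ones n×n matrix J, and the (2,1), (3,2), (1,3) blocks equal to the zero matrix. Then M is the adjacency matrix of a regular 3n-tournament, and if at least one of T1, T2, T3 is not (n−1)-spectrally monomorphic, then the 3n-tournament with adjacency matrix M is not (3n−1)-spectrally monomorphic. -/

import Mathlib

open Polynomial Matrix

/-- A tournament on a finite vertex type `V`, given by its adjacency matrix:
entries in `{0,1}`, zero diagonal, and `A + Aᵀ = J - I`. -/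
def IsTournament {V : Type} [Fintype V] [DecidableEq V] (A : Matrix V V ℚ) : Prop :=
  (∀ i j, A i j = 0 ∨ A i j = 1) ∧ (∀ i, A i i = 0) ∧
    A + Aᵀ = Matrix.of (fun _ _ => (1 : ℚ)) - 1

/-- A regular tournament: every row sums to `(|V| - 1) / 2`. -/
def IsRegularTournament {V : Type} [Fintype V] (A : Matrix V V ℚ) : Prop :=
  ∀ i, ∑ j, A i j = ((Fintype.card V : ℚ) - 1) / 2

/-- `A` is `k`-spectrally monomorphic: all `k × k` principal submatrices of `A`
have the same characteristic polynomial. -/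
def SpecMono {V : Type} [Fintype V] [DecidableEq V] (k : ℕ) (A : Matrix V V ℚ) : Prop :=
  ∀ f g : Fin k → V, Function.Injective f → Function.Injective g →
    (A.submatrix f f).charpoly = (A.submatrix g g).charpoly

set_option synthInstance.maxHeartbeats 1000000
set_option maxHeartbeats 2000000

noncomputable section

abbrev KK := RatFunc ℚ

lemma det_eval {m : Type} [Fintype m] [DecidableEq m] (N : Matrix m m ℚ) (z : KK) :
    Matrix.det (z • (1 : Matrix m m KK) - N.map (algebraMap ℚ KK)) = aeval z N.charpoly := by
  have : aeval z N.charpoly = ((aeval z : ℚ[X] →ₐ[ℚ] KK) : ℚ[X] →+* KK) N.charpoly := rfl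
  rw [this, Matrix.charpoly, RingHom.map_det]
  congr 1
  ext i j
  by_cases h : i = j
  · subst h
    simp [charmatrix_apply_eq, Matrix.map_apply, Matrix.one_apply, Matrix.smul_apply]
  · simp [charmatrix_apply_ne _ _ _ h, Matrix.map_apply, Matrix.one_apply_ne h,
      Matrix.smul_apply, h]

lemma phi_eq_aeval (p : ℚ[X]) : algebraMap ℚ[X] KK p = aeval (algebraMap ℚ[X] KK X) p := by
  conv_lhs => rw [← Polynomial.eval₂_C_X (p := p)]
  rw [Polynomial.hom_eval₂]
  rw [show ((algebraMap ℚ[X] KK).comp Polynomial.C) = algebraMap ℚ KK from Subsingleton.elim _ _]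
  rfl

lemma phi_comp (p q : ℚ[X]) :
    algebraMap ℚ[X] KK (p.comp q) = aeval (algebraMap ℚ[X] KK q) p := by
  rw [Polynomial.comp, Polynomial.hom_eval₂]
  rw [show ((algebraMap ℚ[X] KK).comp Polynomial.C) = algebraMap ℚ KK from Subsingleton.elim _ _]
  rfl

lemma phi_C (a : ℚ) : algebraMap ℚ[X] KK (Polynomial.C a) = algebraMap ℚ KK a := by
  rw [show ((algebraMap ℚ KK) a) = ((algebraMap ℚ[X] KK).comp Polynomial.C) a from
    by rw [Subsingleton.elim ((algebraMap ℚ[X] KK).comp Polynomial.C) (algebraMap ℚ KK)]]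
  rfl

lemma charpoly_transpose {m : Type} [Fintype m] [DecidableEq m] (N : Matrix m m ℚ) :
    (Nᵀ).charpoly = N.charpoly := by
  rw [Matrix.charpoly, Matrix.charpoly, ← Matrix.det_transpose (charmatrix N)]
  congr 1
  ext i j
  by_cases h : i = j
  · subst h; simp [charmatrix_apply_eq]
  · simp [charmatrix_apply_ne _ _ _ h, charmatrix_apply_ne _ _ _ (Ne.symm h),
      Matrix.transpose_apply]

abbrev σn (n : ℕ) := Fin (n-1) ⊕ (Fin n ⊕ Fin n)

def Nmat (n : ℕ) (A₀ : Matrix (Fin (n-1)) (Fin (n-1)) ℚ) (B C : Matrix (Fin n) (Fin n) ℚ) :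
    Matrix (σn n) (σn n) ℚ
  | .inl i, .inl j => A₀ i j
  | .inl _, .inr (.inl _) => 1
  | .inl _, .inr (.inr _) => 0
  | .inr (.inl _), .inl _ => 0
  | .inr (.inl i), .inr (.inl j) => B i j
  | .inr (.inl _), .inr (.inr _) => 1
  | .inr (.inr _), .inl _ => 1
  | .inr (.inr _), .inr (.inl _) => 0
  | .inr (.inr i), .inr (.inr j) => C i j

def Umat (n : ℕ) : Matrix (σn n) (Fin 3) KK
  | .inl _ => ![1,0,0]
  | .inr (.inl _) => ![0,1,0]
  | .inr (.inr _) => ![0,0,1]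

def Vmat (n : ℕ) : Matrix (σn n) (Fin 3) KK
  | .inl _ => ![0,0,1]
  | .inr (.inl _) => ![1,0,0]
  | .inr (.inr _) => ![0,1,0]

def psiQ (n : ℕ) (p : ℚ[X]) : ℚ[X] :=
  p * ((X - C (((n:ℚ) - 1)/2))^2 + C ((n:ℚ)^2)) - C ((n:ℚ)^2) * (-1)^(n-1) * p.comp (-X - 1)

lemma key (n : ℕ) (hn : 1 ≤ n) (A₀ : Matrix (Fin (n-1)) (Fin (n-1)) ℚ)
    (B C : Matrix (Fin n) (Fin n) ℚ)
    (hA₀ : A₀ + A₀ᵀ = Matrix.of (fun _ _ => (1:ℚ)) - 1)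
    (hB : ∀ i, ∑ j, B i j = ((n:ℚ)-1)/2) (hC : ∀ i, ∑ j, C i j = ((n:ℚ)-1)/2) :
    (X - Polynomial.C (((n:ℚ)-1)/2))^2 * (Nmat n A₀ B C).charpoly
      = B.charpoly * C.charpoly * psiQ n A₀.charpoly := by
  set r : ℚ := ((n:ℚ)-1)/2 with hrdef
  set φ : ℚ[X] →+* KK := algebraMap ℚ[X] KK with hφdef
  set ψ : ℚ →+* KK := algebraMap ℚ KK with hψdef
  have hφ : Function.Injective φ := RatFunc.algebraMap_injective ℚ
  apply hφ
  set x : KK := φ X with hxdef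
  set ρ : KK := ψ r with hρdef
  -- the block matrices over KK
  set WA : Matrix (Fin (n-1)) (Fin (n-1)) KK := x • 1 - A₀.map ψ with hWA
  set WB : Matrix (Fin n) (Fin n) KK := x • 1 - B.map ψ with hWB
  set WC : Matrix (Fin n) (Fin n) KK := x • 1 - C.map ψ with hWC
  have hdA : WA.det = φ A₀.charpoly := by rw [hWA, det_eval, ← phi_eq_aeval]
  have hdB : WB.det = φ B.charpoly := by rw [hWB, det_eval, ← phi_eq_aeval]
  have hdC : WC.det = φ C.charpoly := by rw [hWC, det_eval, ← phi_eq_aeval]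
  have hdA0 : IsUnit WA.det := by
    rw [isUnit_iff_ne_zero, hdA]
    exact fun h => (Matrix.charpoly_monic A₀).ne_zero (hφ (by simpa using h))
  have hdB0 : IsUnit WB.det := by
    rw [isUnit_iff_ne_zero, hdB]
    exact fun h => (Matrix.charpoly_monic B).ne_zero (hφ (by simpa using h))
  have hdC0 : IsUnit WC.det := by
    rw [isUnit_iff_ne_zero, hdC]
    exact fun h => (Matrix.charpoly_monic C).ne_zero (hφ (by simpa using h))
  have hxρ : x - ρ ≠ 0 := by
    have : x - ρ = φ (X - Polynomial.C r) := by
      rw [map_sub, phi_C]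
    rw [this]
    intro h
    exact (Polynomial.X_sub_C_ne_zero r) (hφ (by simpa using h))
  set y : KK := (x - ρ)⁻¹ with hy
  have hzy : (x - ρ) * y = 1 := mul_inv_cancel₀ hxρ
  -- row sums
  have hWBones : WB *ᵥ (fun _ => (1:KK)) = fun _ => (x - ρ) := by
    funext i
    simp only [Matrix.mulVec, dotProduct, hWB, Matrix.sub_apply, Matrix.smul_apply,
      Matrix.one_apply, Matrix.map_apply, mul_one, smul_eq_mul]
    rw [Finset.sum_sub_distrib, ← map_sum]
    simp [mul_ite, Finset.sum_ite_eq, hB i, hρdef]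
  have hWCones : WC *ᵥ (fun _ => (1:KK)) = fun _ => (x - ρ) := by
    funext i
    simp only [Matrix.mulVec, dotProduct, hWC, Matrix.sub_apply, Matrix.smul_apply,
      Matrix.one_apply, Matrix.map_apply, mul_one, smul_eq_mul]
    rw [Finset.sum_sub_distrib, ← map_sum]
    simp [mul_ite, Finset.sum_ite_eq, hC i, hρdef]
  have hWBy : WB *ᵥ (fun _ => y) = fun _ => (1:KK) := by
    funext i
    calc (WB *ᵥ fun _ => y) i = ((WB *ᵥ fun _ => (1:KK)) i) * y := by
          simp [Matrix.mulVec, dotProduct, Finset.sum_mul]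
    _ = 1 := by rw [hWBones]; exact hzy
  have hWCy : WC *ᵥ (fun _ => y) = fun _ => (1:KK) := by
    funext i
    calc (WC *ᵥ fun _ => y) i = ((WC *ᵥ fun _ => (1:KK)) i) * y := by
          simp [Matrix.mulVec, dotProduct, Finset.sum_mul]
    _ = 1 := by rw [hWCones]; exact hzy
  -- the vector w and α
  set w : Fin (n-1) → KK := WA⁻¹ *ᵥ (fun _ => 1) with hw
  have hWAw : WA *ᵥ w = fun _ => (1:KK) := by
    rw [hw, Matrix.mulVec_mulVec, Matrix.mul_nonsing_inv _ hdA0, Matrix.one_mulVec]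
  set αs : KK := ∑ i, w i with hαs
  -- big block matrix over KK
  set W : Matrix (σn n) (σn n) KK :=
    Matrix.fromBlocks WA 0 0 (Matrix.fromBlocks WB 0 0 WC) with hWdef
  set G : Matrix (σn n) (Fin 3) KK :=
    Matrix.of (fun a j => Sum.elim (fun i => ![w i, 0, 0] j)
      (Sum.elim (fun _ => ![0, y, 0] j) (fun _ => ![0, 0, y] j)) a) with hGdef
  have hWG : W * G = Umat n := by
    ext a j
    rcases a with i | i | i
    · fin_cases j
      · simpa [hWdef, hGdef, Matrix.mul_apply, Fintype.sum_sum_type, Umat,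
          Matrix.mulVec, dotProduct] using congrFun hWAw i
      · simp [hWdef, hGdef, Matrix.mul_apply, Fintype.sum_sum_type, Umat]
      · simp [hWdef, hGdef, Matrix.mul_apply, Fintype.sum_sum_type, Umat]
    · fin_cases j
      · simp [hWdef, hGdef, Matrix.mul_apply, Fintype.sum_sum_type, Umat]
      · simpa [hWdef, hGdef, Matrix.mul_apply, Fintype.sum_sum_type, Umat,
          Matrix.mulVec, dotProduct] using congrFun hWBy i
      · simp [hWdef, hGdef, Matrix.mul_apply, Fintype.sum_sum_type, Umat]
    · fin_cases j
      · simp [hWdef, hGdef, Matrix.mul_apply, Fintype.sum_sum_type, Umat]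
      · simp [hWdef, hGdef, Matrix.mul_apply, Fintype.sum_sum_type, Umat]
      · simpa [hWdef, hGdef, Matrix.mul_apply, Fintype.sum_sum_type, Umat,
          Matrix.mulVec, dotProduct] using congrFun hWCy i
  have h_split : x • (1 : Matrix (σn n) (σn n) KK) - (Nmat n A₀ B C).map ψ
      = W - Umat n * (Vmat n)ᵀ := by
    ext a b
    rcases a with i | i | i <;> rcases b with k | k | k <;>
      simp [Nmat, Umat, Vmat, hWdef, hWA, hWB, hWC, Matrix.mul_apply, Matrix.one_apply,
        Fin.sum_univ_three, Matrix.map_apply, Sum.inl.injEq, Sum.inr.injEq]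
  have hfact : W - Umat n * (Vmat n)ᵀ = W * (1 - G * (Vmat n)ᵀ) := by
    rw [Matrix.mul_sub, Matrix.mul_one, ← Matrix.mul_assoc, hWG]
  have hswap : Matrix.det ((1 : Matrix (σn n) (σn n) KK) - G * (Vmat n)ᵀ)
      = Matrix.det ((1 : Matrix (Fin 3) (Fin 3) KK) - (Vmat n)ᵀ * G) := by
    have h1 : (1 : Matrix (σn n) (σn n) KK) - G * (Vmat n)ᵀ = 1 + (-G) * (Vmat n)ᵀ := by
      rw [Matrix.neg_mul, sub_eq_add_neg]
    have h2 : (1 : Matrix (Fin 3) (Fin 3) KK) - (Vmat n)ᵀ * G = 1 + (Vmat n)ᵀ * (-G) := by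
      rw [Matrix.mul_neg, sub_eq_add_neg]
    rw [h1, h2, Matrix.det_one_add_mul_comm]
  have hT : (1 : Matrix (Fin 3) (Fin 3) KK) - (Vmat n)ᵀ * G =
      !![1, -((n:KK) * y), 0; 0, 1, -((n:KK) * y); -αs, 0, 1] := by
    ext i j
    fin_cases i <;> fin_cases j <;>
      simp [Vmat, hGdef, Matrix.mul_apply, Fintype.sum_sum_type, Matrix.one_apply,
        Finset.sum_const, Finset.card_univ, hαs, mul_comm]
  have hdet3 : Matrix.det ((1 : Matrix (Fin 3) (Fin 3) KK) - (Vmat n)ᵀ * G)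
      = 1 - (n:KK)^2 * (y*y) * αs := by
    rw [hT, Matrix.det_fin_three]
    simp
    ring
  have hdetW : W.det = WA.det * (WB.det * WC.det) := by
    rw [hWdef, Matrix.det_fromBlocks_zero₂₁, Matrix.det_fromBlocks_zero₂₁]
  have hdetN : φ (Nmat n A₀ B C).charpoly
      = WA.det * (WB.det * WC.det) * (1 - (n:KK)^2 * (y*y) * αs) := by
    rw [phi_eq_aeval, ← det_eval, ← hxdef, h_split, hfact, Matrix.det_mul, hswap, hdet3, hdetW]
  -- the rank-one update for the A-block
  set uu : Matrix (Fin (n-1)) (Fin 1) KK := Matrix.of (fun _ _ => 1) with huu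
  have huuJ : uu * uuᵀ = Matrix.of (fun _ _ => (1:KK)) := by
    ext i j; simp [Matrix.mul_apply, huu]
  have hGA : WA * (WA⁻¹ * uu) = uu := by
    rw [← Matrix.mul_assoc, Matrix.mul_nonsing_inv _ hdA0, Matrix.one_mul]
  have hfactA : WA + Matrix.of (fun _ _ => (1:KK)) = WA * (1 + (WA⁻¹ * uu) * uuᵀ) := by
    rw [Matrix.mul_add, Matrix.mul_one, ← Matrix.mul_assoc, hGA, huuJ]
  have hdetA1 : (WA + Matrix.of (fun _ _ => (1:KK))).det = WA.det * (1 + αs) := by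
    rw [hfactA, Matrix.det_mul, Matrix.det_one_add_mul_comm, Matrix.det_fin_one]
    congr 1
    simp [Matrix.add_apply, Matrix.mul_apply, Matrix.one_apply, huu, hαs, hw,
      Matrix.mulVec, dotProduct, Finset.mul_sum]
  -- identify the shifted determinant
  have hA₀diag : ∀ i, A₀ i i = 0 := by
    intro i
    have := congrFun (congrFun hA₀ i) i
    simp [Matrix.add_apply, Matrix.transpose_apply, Matrix.one_apply, Matrix.sub_apply] at this
    linarith
  have hA₀off : ∀ i j, i ≠ j → A₀ i j + A₀ j i = 1 := by
    intro i j h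
    have := congrFun (congrFun hA₀ i) j
    simpa [Matrix.add_apply, Matrix.transpose_apply, Matrix.one_apply, Matrix.sub_apply, h]
      using this
  have hplus : WA + Matrix.of (fun _ _ => (1:KK)) = -((-x-1) • 1 - A₀ᵀ.map ψ) := by
    ext i j
    by_cases h : i = j
    · subst h
      simp [hWA, Matrix.add_apply, Matrix.sub_apply, Matrix.smul_apply, Matrix.one_apply,
        Matrix.map_apply, Matrix.neg_apply, Matrix.transpose_apply, hA₀diag i] <;>
      ring
    · simp [hWA, Matrix.add_apply, Matrix.sub_apply, Matrix.smul_apply, Matrix.one_apply_ne h,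
        Matrix.one_apply_ne (Ne.symm h), Matrix.map_apply, Matrix.neg_apply,
        Matrix.transpose_apply, h, Ne.symm h]
      have h2 : ψ (A₀ i j) + ψ (A₀ j i) = 1 := by
        rw [← map_add, hA₀off i j h, _root_.map_one]
      simp only [eq_ratCast] at h2
      linear_combination -h2
  have hDp : (WA + Matrix.of (fun _ _ => (1:KK))).det
      = (-1:KK)^(n-1) * φ (A₀.charpoly.comp (-X - 1)) := by
    rw [hplus, Matrix.det_neg, Fintype.card_fin]
    congr 1
    rw [det_eval, _root_.charpoly_transpose, phi_comp, hxdef, map_sub, map_neg, _root_.map_one]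
  have hαrel : φ A₀.charpoly * (1 + αs) = (-1:KK)^(n-1) * φ (A₀.charpoly.comp (-X - 1)) := by
    rw [← hdA, ← hdetA1, hDp]
  -- final assembly
  rw [_root_.map_mul, _root_.map_mul, _root_.map_pow, _root_.map_sub, phi_C, hdetN, hdA, hdB, hdC]
  simp only [psiQ, _root_.map_sub, _root_.map_mul, _root_.map_add, _root_.map_pow, map_neg,
    _root_.map_one, phi_C, map_natCast]
  rw [← hψdef, ← hρdef, ← hxdef]
  have hCr : φ (Polynomial.C (((n:ℚ) - 1)/2)) = ρ := by
    rw [hρdef, hrdef, hφdef, hψdef]; exact phi_C _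
  rw [hCr]
  linear_combination
    (-((n:KK)^2 * (φ B.charpoly) * (φ C.charpoly) * (φ A₀.charpoly) * αs * ((x-ρ)*y + 1))) * hzy
    + (-((n:KK)^2 * (φ B.charpoly) * (φ C.charpoly))) * hαrel
lemma psiQ_inj (n : ℕ) (hn : 1 ≤ n) {p q : ℚ[X]} (h : psiQ n p = psiQ n q) : p = q := by
  by_contra hne
  set r : ℚ := ((n:ℚ) - 1)/2 with hr
  set δ : ℚ[X] := p - q with hδ
  have hδ0 : δ ≠ 0 := sub_ne_zero.mpr hne
  have hkey : δ * ((X - C r)^2 + C ((n:ℚ)^2)) = C ((n:ℚ)^2) * (-1)^(n-1) * δ.comp (-X - 1) := by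
    have := sub_eq_zero.mpr h
    unfold psiQ at this
    have hcomp : δ.comp (-X - 1) = p.comp (-X-1) - q.comp (-X-1) := by
      simp [hδ, sub_comp]
    rw [hcomp, hr]
    ring_nf
    ring_nf at this
    linear_combination this
  have hmmonic : Polynomial.Monic ((X - C r)^2 + C ((n:ℚ)^2)) := by
    apply Polynomial.Monic.add_of_left ((monic_X_sub_C r).pow 2)
    calc Polynomial.degree (C ((n:ℚ)^2)) ≤ 0 := degree_C_le
    _ < 2 := by norm_num
    _ = Polynomial.degree ((X - C r)^2) := by
        rw [degree_pow, degree_X_sub_C]; rfl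
  have hm0 : ((X - C r)^2 + C ((n:ℚ)^2)) ≠ 0 := hmmonic.ne_zero
  have hdm : ((X - C r)^2 + C ((n:ℚ)^2)).natDegree = 2 := by
    have : Polynomial.degree ((X - C r)^2 + C ((n:ℚ)^2)) = 2 := by
      rw [add_comm, degree_add_eq_right_of_degree_lt, degree_pow, degree_X_sub_C]
      · rfl
      · calc Polynomial.degree (C ((n:ℚ)^2)) ≤ 0 := degree_C_le
        _ < 2 := by norm_num
        _ = Polynomial.degree ((X - C r)^2) := by rw [degree_pow, degree_X_sub_C]; rfl
    exact natDegree_eq_of_degree_eq_some this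
  have hL : natDegree (δ * ((X - C r)^2 + C ((n:ℚ)^2))) = δ.natDegree + 2 := by
    rw [natDegree_mul hδ0 hm0, hdm]
  have hR : natDegree (C ((n:ℚ)^2) * (-1)^(n-1) * δ.comp (-X - 1)) ≤ δ.natDegree := by
    refine le_trans (natDegree_mul_le) ?_
    have h1 : natDegree (C ((n:ℚ)^2) * (-1)^(n-1)) ≤ 0 :=
      le_trans natDegree_mul_le (by simp [natDegree_pow])
    have h2 : natDegree (δ.comp (-X - 1)) ≤ δ.natDegree := by
      rw [natDegree_comp]
      have : (-X - 1 : ℚ[X]).natDegree = 1 := by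
        compute_degree!
      simp [this]
    omega
  rw [hkey] at hL
  omega

lemma subtour {n m : ℕ} (P : Matrix (Fin n) (Fin n) ℚ)
    (hP : P + Pᵀ = Matrix.of (fun _ _ => (1:ℚ)) - 1)
    (f : Fin m → Fin n) (hf : Function.Injective f) :
    P.submatrix f f + (P.submatrix f f)ᵀ = Matrix.of (fun _ _ => (1:ℚ)) - 1 := by
  ext i j
  have := congrFun (congrFun hP (f i)) (f j)
  simp only [Matrix.add_apply, Matrix.transpose_apply, Matrix.sub_apply, Matrix.of_apply,
    Matrix.one_apply, Matrix.submatrix_apply] at this ⊢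
  rw [this]
  simp [hf.eq_iff]

lemma key_cancel (n : ℕ) (hn : 1 ≤ n) (P Q R : Matrix (Fin n) (Fin n) ℚ)
    (hP : P + Pᵀ = Matrix.of (fun _ _ => (1:ℚ)) - 1)
    (hQ : ∀ i, ∑ j, Q i j = ((n:ℚ)-1)/2) (hR : ∀ i, ∑ j, R i j = ((n:ℚ)-1)/2)
    (M : Matrix (Fin 3 × Fin n) (Fin 3 × Fin n) ℚ)
    (hsub : ∀ f : Fin (n-1) → Fin n, Function.Injective f →
      ∃ F : Fin (3*n-1) → Fin 3 × Fin n, Function.Injective F ∧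
        (M.submatrix F F).charpoly = (Nmat n (P.submatrix f f) Q R).charpoly)
    (hSM : SpecMono (3*n-1) M) : SpecMono (n-1) P := by
  intro f g hf hg
  obtain ⟨F, hF, hF2⟩ := hsub f hf
  obtain ⟨G, hG, hG2⟩ := hsub g hg
  have h0 := hSM F G hF hG
  have hNN : (Nmat n (P.submatrix f f) Q R).charpoly
      = (Nmat n (P.submatrix g g) Q R).charpoly := by rw [← hF2, ← hG2, h0]
  have k1 := key n hn (P.submatrix f f) Q R (subtour P hP f hf) hQ hR
  have k2 := key n hn (P.submatrix g g) Q R (subtour P hP g hg) hQ hR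
  rw [hNN, k2] at k1
  have := mul_left_cancel₀
    (mul_ne_zero Q.charpoly_monic.ne_zero R.charpoly_monic.ne_zero) k1.symm
  exact psiQ_inj n hn this

def gmap (n : ℕ) (c : Fin 3) (f : Fin (n-1) → Fin n) : σn n → Fin 3 × Fin n :=
  Sum.elim (fun i => (c, f i)) (Sum.elim (fun j => (c+1, j)) (fun j => (c+2, j)))

lemma gmap_injective (n : ℕ) (c : Fin 3) (f : Fin (n-1) → Fin n)
    (hf : Function.Injective f) : Function.Injective (gmap n c f) := by
  have d1 : ∀ c : Fin 3, ¬ (c = c + 1) := by decide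
  have d2 : ∀ c : Fin 3, ¬ (c = c + 2) := by decide
  have d3 : ∀ c : Fin 3, ¬ (c + 1 = c) := by decide
  have d4 : ∀ c : Fin 3, ¬ (c + 1 = c + 2) := by decide
  have d5 : ∀ c : Fin 3, ¬ (c + 2 = c) := by decide
  have d6 : ∀ c : Fin 3, ¬ (c + 2 = c + 1) := by decide
  rintro (i|i|i) (k|k|k) h <;>
    simp only [gmap, Sum.elim_inl, Sum.elim_inr, Prod.mk.injEq] at h
  · exact congrArg Sum.inl (hf h.2)
  · exact absurd h.1 (d1 c)
  · exact absurd h.1 (d2 c)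
  · exact absurd h.1 (d3 c)
  · exact congrArg (Sum.inr ∘ Sum.inl) h.2
  · exact absurd h.1 (d4 c)
  · exact absurd h.1 (d5 c)
  · exact absurd h.1 (d6 c)
  · exact congrArg (Sum.inr ∘ Sum.inr) h.2

lemma charpoly_gmap (n : ℕ) (A B C : Matrix (Fin n) (Fin n) ℚ)
    (M : Matrix (Fin 3 × Fin n) (Fin 3 × Fin n) ℚ)
    (hM : ∀ p q : Fin 3 × Fin n,
      M p q = if p.1 = q.1 then ![A, B, C] p.1 p.2 q.2
        else if q.1 = p.1 + 1 then 1 else 0)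
    (c : Fin 3) (f : Fin (n-1) → Fin n) (e : Fin (3*n-1) ≃ σn n) :
    (M.submatrix (gmap n c f ∘ e) (gmap n c f ∘ e)).charpoly
      = (Nmat n ((![A, B, C] c).submatrix f f) (![A, B, C] (c+1)) (![A, B, C] (c+2))).charpoly := by
  have hsub : M.submatrix (gmap n c f) (gmap n c f)
      = Nmat n ((![A, B, C] c).submatrix f f) (![A, B, C] (c+1)) (![A, B, C] (c+2)) := by
    have d1 : ∀ c : Fin 3, ¬ (c = c + 1) := by decide
    have d2 : ∀ c : Fin 3, ¬ (c = c + 2) := by decide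
    have d3 : ∀ c : Fin 3, ¬ (c + 1 = c) := by decide
    have d4 : ∀ c : Fin 3, ¬ (c + 1 = c + 2) := by decide
    have d5 : ∀ c : Fin 3, ¬ (c + 2 = c) := by decide
    have d6 : ∀ c : Fin 3, ¬ (c + 2 = c + 1) := by decide
    have d7 : ∀ c : Fin 3, c + 1 + 1 = c + 2 := by decide
    have d8 : ∀ c : Fin 3, c + 2 + 1 = c := by decide
    ext a b
    rcases a with i|i|i <;> rcases b with k|k|k <;>
      simp [gmap, Nmat, hM, d1 c, d2 c, d3 c, d4 c, d5 c, d6 c, d7 c, d8 c]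
  have h1 : M.submatrix (gmap n c f ∘ e) (gmap n c f ∘ e)
      = ((M.submatrix (gmap n c f) (gmap n c f)).submatrix e e) := by
    rw [Matrix.submatrix_submatrix]
  rw [h1, hsub, show ((Nmat n ((![A, B, C] c).submatrix f f) (![A, B, C] (c+1))
      (![A, B, C] (c+2))).submatrix e e)
    = (Matrix.reindex e.symm e.symm) (Nmat n ((![A, B, C] c).submatrix f f) (![A, B, C] (c+1))
      (![A, B, C] (c+2))) from rfl, Matrix.charpoly_reindex]

theorem stmt_10 (n : ℕ) (A B C : Matrix (Fin n) (Fin n) ℚ)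
    (hA : IsTournament A) (hB : IsTournament B) (hC : IsTournament C)
    (hrA : IsRegularTournament A) (hrB : IsRegularTournament B)
    (hrC : IsRegularTournament C)
    (M : Matrix (Fin 3 × Fin n) (Fin 3 × Fin n) ℚ)
    (hM : ∀ p q : Fin 3 × Fin n,
      M p q = if p.1 = q.1 then ![A, B, C] p.1 p.2 q.2
        else if q.1 = p.1 + 1 then 1 else 0) :
    (IsTournament M ∧ IsRegularTournament M) ∧
      ((¬ SpecMono (n - 1) A ∨ ¬ SpecMono (n - 1) B ∨ ¬ SpecMono (n - 1) C) →
        ¬ SpecMono (3 * n - 1) M) := by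
  constructor
  · constructor
    · refine ⟨?_, ?_, ?_⟩
      · rintro ⟨p1, p2⟩ ⟨q1, q2⟩
        rw [hM (p1,p2) (q1,q2)]
        by_cases h : p1 = q1
        · subst h
          simp only [if_pos rfl]
          fin_cases p1
          · exact hA.1 p2 q2
          · exact hB.1 p2 q2
          · exact hC.1 p2 q2
        · by_cases h2 : q1 = p1 + 1 <;> simp [h, h2]
      · rintro ⟨p1, p2⟩
        rw [hM (p1,p2) (p1,p2)]
        simp only [if_pos rfl]
        fin_cases p1
        · exact hA.2.1 p2
        · exact hB.2.1 p2
        · exact hC.2.1 p2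
      · ext ⟨p1, p2⟩ ⟨q1, q2⟩
        simp only [Matrix.add_apply, Matrix.transpose_apply, Matrix.sub_apply, Matrix.of_apply,
          Matrix.one_apply]
        rw [hM (p1,p2) (q1,q2), hM (q1,q2) (p1,p2)]
        by_cases h : p1 = q1
        · subst h
          simp only [if_pos rfl]
          have e1 := congrFun (congrFun hA.2.2 p2) q2
          have e2 := congrFun (congrFun hB.2.2 p2) q2
          have e3 := congrFun (congrFun hC.2.2 p2) q2
          simp only [Matrix.add_apply, Matrix.transpose_apply, Matrix.sub_apply, Matrix.of_apply,
            Matrix.one_apply] at e1 e2 e3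
          fin_cases p1
          · simpa [Prod.mk.injEq] using e1
          · simpa [Prod.mk.injEq] using e2
          · simpa [Prod.mk.injEq] using e3
        · have hne : ¬((p1,p2) = (q1,q2)) := by simp [h]
          simp only [if_neg h, if_neg (fun hh : q1 = p1 => h hh.symm), if_neg hne]
          fin_cases p1 <;> fin_cases q1 <;> simp_all <;> norm_num
    · rintro ⟨p1, p2⟩
      rw [show (∑ q : Fin 3 × Fin n, M (p1,p2) q) = ∑ q1, ∑ q2, M (p1,p2) (q1,q2) from
        Fintype.sum_prod_type _]
      rw [Fin.sum_univ_three]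
      simp only [hM]
      have hA' := hrA p2
      have hB' := hrB p2
      have hC' := hrC p2
      simp only [IsRegularTournament, Fintype.card_fin] at hA' hB' hC'
      fin_cases p1 <;>
        simp [Fintype.card_prod, hA', hB', hC', Finset.sum_const, Finset.card_univ] <;>
        push_cast <;> ring
  · intro hyp hSM
    rcases Nat.eq_zero_or_pos n with h0 | hn
    · subst h0
      have triv : ∀ (P : Matrix (Fin 0) (Fin 0) ℚ), SpecMono (0-1) P := by
        intro P f g _ _
        congr 1
        ext i j
        exact absurd i.2 (by omega)
      rcases hyp with h | h | h <;> exact h (triv _)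
    · have e : Fin (3*n-1) ≃ σn n := Fintype.equivOfCardEq (by
        simp only [Fintype.card_sum, Fintype.card_fin]
        omega)
      have hQA : ∀ i, ∑ j, A i j = ((n:ℚ)-1)/2 := by
        intro i; have := hrA i; simpa using this
      have hQB : ∀ i, ∑ j, B i j = ((n:ℚ)-1)/2 := by
        intro i; have := hrB i; simpa using this
      have hQC : ∀ i, ∑ j, C i j = ((n:ℚ)-1)/2 := by
        intro i; have := hrC i; simpa using this
      have c01 : (0:Fin 3) + 1 = 1 := by decide
      have c02 : (0:Fin 3) + 2 = 2 := by decide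
      have c11 : (1:Fin 3) + 1 = 2 := by decide
      have c12 : (1:Fin 3) + 2 = 0 := by decide
      have c21 : (2:Fin 3) + 1 = 0 := by decide
      have c22 : (2:Fin 3) + 2 = 1 := by decide
      rcases hyp with h | h | h
      · refine h (key_cancel n hn A B C hA.2.2 hQB hQC M ?_ hSM)
        intro f hf
        refine ⟨gmap n 0 f ∘ e, (gmap_injective n 0 f hf).comp e.injective, ?_⟩
        have := charpoly_gmap n A B C M hM 0 f e
        rw [c01, c02] at this
        simpa using this
      · refine h (key_cancel n hn B C A hB.2.2 hQC hQA M ?_ hSM)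
        intro f hf
        refine ⟨gmap n 1 f ∘ e, (gmap_injective n 1 f hf).comp e.injective, ?_⟩
        have := charpoly_gmap n A B C M hM 1 f e
        rw [c11, c12] at this
        simpa using this
      · refine h (key_cancel n hn C A B hC.2.2 hQA hQB M ?_ hSM)
        intro f hf
        refine ⟨gmap n 2 f ∘ e, (gmap_injective n 2 f hf).comp e.injective, ?_⟩
        have := charpoly_gmap n A B C M hM 2 f e
        rw [c21, c22] at this
        simpa using this
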